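/- The stabilizer in 𝐆_L = ∏_{1≤i≤r} GL(P_i) of the tuple (ξ₂, …, ξ_r) of canonical composition maps ξ_i : P_i ⊗ A_{i,i-1} → P_{i-1} is exactly the image of the group G_L under the embedding θ_L. That is, an element (γ₁, …, γ_r) ∈ ∏ GL(P_i) satisfies γ_{i-1} ∘ ξ_i = ξ_i ∘ (γ_i ⊗ id) for all 2 ≤ i ≤ r if and only if it equals θ_L(g) for some g ∈ G_L. -/

import Mathlib

open Module
open scoped TensorProduct

set_option linter.unusedSectionVars false
set_option maxHeartbeats 1000000
noncomputable section

section Stab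

variable (r : ℕ) (M : Fin (r + 1) → Type) (A : Fin (r + 1) → Fin (r + 1) → Type)
  [∀ i, AddCommGroup (M i)] [∀ i, Module ℂ (M i)] [∀ i, FiniteDimensional ℂ (M i)]
  [∀ j i, AddCommGroup (A j i)] [∀ j i, Module ℂ (A j i)]
  [∀ j i, FiniteDimensional ℂ (A j i)]
  (cA : ∀ k j i : Fin (r + 1), A k j →ₗ[ℂ] A j i →ₗ[ℂ] A k i)

/-- `P i = ⊕_{i ≤ j} M j ⊗ A j i`. -/
abbrev P (i : Fin (r + 1)) : Type :=
  ∀ j : {j : Fin (r + 1) // i ≤ j}, M j.1 ⊗[ℂ] A j.1 i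

/-- Given a (curried) pairing `c : Aj ⊗ A' → Aout`, the induced map
`(Mj ⊗ Aj) ⊗ A' → Mj ⊗ Aout`, curried in the `A'` variable. -/
def mulRight {Mj Aj A' Aout : Type}
    [AddCommGroup Mj] [Module ℂ Mj] [AddCommGroup Aj] [Module ℂ Aj]
    [AddCommGroup A'] [Module ℂ A'] [AddCommGroup Aout] [Module ℂ Aout]
    (c : Aj →ₗ[ℂ] A' →ₗ[ℂ] Aout) :
    (Mj ⊗[ℂ] Aj) →ₗ[ℂ] A' →ₗ[ℂ] (Mj ⊗[ℂ] Aout) :=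
  ((LinearMap.lTensorHom Mj (R := ℂ)).comp c.flip).flip

/-- The canonical map `ξ_i : P_i ⊗ A_{i,i−1} → P_{i−1}` (curried in the second variable),
induced componentwise by the compositions `A_{ji} ⊗ A_{i,i−1} → A_{j,i−1}`. -/
def xi (i : Fin r) : P r M A i.succ →ₗ[ℂ] A i.succ i.castSucc →ₗ[ℂ] P r M A i.castSucc :=
  ∑ j : {j : Fin (r + 1) // i.succ ≤ j},
    ((LinearMap.llcomp ℂ (A i.succ i.castSucc) (M j.1 ⊗[ℂ] A j.1 i.castSucc)
        (P r M A i.castSucc)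
        (LinearMap.single ℂ (fun j' : {j' : Fin (r + 1) // i.castSucc ≤ j'} =>
          M j'.1 ⊗[ℂ] A j'.1 i.castSucc)
          ⟨j.1, le_trans (le_of_lt (Fin.castSucc_lt_succ : i.castSucc < i.succ)) j.2⟩)).comp
      (mulRight (cA j.1 i.succ i.castSucc))).comp (LinearMap.proj j)

/-- The embedding `θ_L` on the level of endomorphisms: given diagonal entries
`g i : M i →ₗ M i` and strictly-lower-triangular entries
`u j i : M i →ₗ M j ⊗ A j i` (for `i < j`), the induced endomorphism of `P i`. -/
def theta (g : ∀ i, M i →ₗ[ℂ] M i)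
    (u : ∀ j i : Fin (r + 1), i < j → (M i →ₗ[ℂ] M j ⊗[ℂ] A j i))
    (i : Fin (r + 1)) : P r M A i →ₗ[ℂ] P r M A i :=
  ∑ j : {j : Fin (r + 1) // i ≤ j},
    (((LinearMap.single ℂ (fun j' : {j' : Fin (r + 1) // i ≤ j'} =>
          M j'.1 ⊗[ℂ] A j'.1 i) j).comp
        (TensorProduct.map (g j.1) LinearMap.id)) +
      ∑ k : Fin (r + 1),
        if h : (j.1 : Fin (r + 1)) < k then
          (LinearMap.single ℂ (fun j' : {j' : Fin (r + 1) // i ≤ j'} =>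
              M j'.1 ⊗[ℂ] A j'.1 i) ⟨k, le_trans j.2 (le_of_lt h)⟩).comp
            ((TensorProduct.map LinearMap.id (TensorProduct.lift (cA k j.1 i))).comp
              (((TensorProduct.assoc ℂ (M k) (A k j.1) (A j.1 i)).toLinearMap).comp
                (TensorProduct.map (u k j.1 h) LinearMap.id)))
        else 0).comp (LinearMap.proj j)


section Lemmas

variable {r M A cA}

lemma mulRight_tmul {Mj Aj A' Aout : Type}
    [AddCommGroup Mj] [Module ℂ Mj] [AddCommGroup Aj] [Module ℂ Aj]
    [AddCommGroup A'] [Module ℂ A'] [AddCommGroup Aout] [Module ℂ Aout]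
    (c : Aj →ₗ[ℂ] A' →ₗ[ℂ] Aout) (m : Mj) (a : Aj) (b : A') :
    mulRight c (m ⊗ₜ[ℂ] a) b = m ⊗ₜ[ℂ] (c a b) := by
  simp [mulRight]

end Lemmas

/-- strictly-lower entry map -/
def lower {j k : Fin (r + 1)} (i : Fin (r + 1)) (v : M j →ₗ[ℂ] M k ⊗[ℂ] A k j) :
    (M j ⊗[ℂ] A j i) →ₗ[ℂ] M k ⊗[ℂ] A k i :=
  (TensorProduct.map LinearMap.id (TensorProduct.lift (cA k j i))).comp
    (((TensorProduct.assoc ℂ (M k) (A k j) (A j i)).toLinearMap).comp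
      (TensorProduct.map v LinearMap.id))

lemma xi_single (i : Fin r) (j : Fin (r + 1)) (h : i.succ ≤ j)
    (y : M j ⊗[ℂ] A j i.succ) (a : A i.succ i.castSucc) :
    xi r M A cA i (Pi.single (⟨j, h⟩ : {j' // i.succ ≤ j'}) y) a =
      Pi.single (⟨j, le_trans (le_of_lt (Fin.castSucc_lt_succ : i.castSucc < i.succ)) h⟩ :
          {j' // i.castSucc ≤ j'}) (mulRight (cA j i.succ i.castSucc) y a) := by
  rw [xi, LinearMap.sum_apply, LinearMap.sum_apply]
  rw [Finset.sum_eq_single_of_mem (⟨j, h⟩ : {j' // i.succ ≤ j'}) (Finset.mem_univ _)]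
  · simp
  · intro b _ hb
    simp [Pi.single_eq_of_ne hb]

lemma theta_single (g : ∀ i, M i →ₗ[ℂ] M i)
    (u : ∀ j i : Fin (r + 1), i < j → (M i →ₗ[ℂ] M j ⊗[ℂ] A j i))
    (i j : Fin (r + 1)) (hij : i ≤ j) (y : M j ⊗[ℂ] A j i) :
    theta r M A cA g u i (Pi.single (⟨j, hij⟩ : {j' // i ≤ j'}) y) =
      Pi.single (⟨j, hij⟩ : {j' // i ≤ j'}) (TensorProduct.map (g j) LinearMap.id y) +
      ∑ k : Fin (r + 1),
        if h : j < k then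
          Pi.single (⟨k, le_trans hij (le_of_lt h)⟩ : {j' // i ≤ j'})
            (lower r M A cA i (u k j h) y)
        else 0 := by
  rw [theta, LinearMap.sum_apply]
  rw [Finset.sum_eq_single_of_mem (⟨j, hij⟩ : {j' // i ≤ j'}) (Finset.mem_univ _)]
  · rw [LinearMap.comp_apply, LinearMap.proj_apply, Pi.single_eq_same,
      LinearMap.add_apply, LinearMap.sum_apply]
    congr 1
    refine Finset.sum_congr rfl fun k _ => ?_
    by_cases h : j < k
    · rw [dif_pos h, dif_pos h]
      simp [lower]
    · rw [dif_neg h, dif_neg h]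
      rfl
  · intro b _ hb
    simp [Pi.single_eq_of_ne hb]

lemma recon (j : Fin (r + 1)) (x : P r M A j) :
    Pi.single (⟨j, le_refl j⟩ : {k // j ≤ k}) (x ⟨j, le_refl j⟩) +
      ∑ k : Fin (r + 1), (if h : j < k then
        Pi.single (⟨k, le_of_lt h⟩ : {k' // j ≤ k'}) (x ⟨k, le_of_lt h⟩) else 0) = x := by
  funext k'
  rw [Pi.add_apply, Finset.sum_apply]
  rcases eq_or_lt_of_le k'.2 with he | hl
  · have hk : k' = ⟨j, le_refl j⟩ := Subtype.ext he.symm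
    subst hk
    rw [Pi.single_eq_same, Finset.sum_eq_zero, add_zero]
    intro k _
    by_cases h : j < k
    · rw [dif_pos h, Pi.single_eq_of_ne]
      intro hc
      exact absurd (congrArg Subtype.val hc) (by simpa using Fin.ne_of_lt h)
    · rw [dif_neg h]
      rfl
  · rw [Pi.single_eq_of_ne, zero_add]
    · rw [Finset.sum_eq_single_of_mem k'.1 (Finset.mem_univ _)]
      · rw [dif_pos hl]
        have : (⟨k'.1, le_of_lt hl⟩ : {k'' // j ≤ k''}) = k' := Subtype.ext rfl
        rw [this, Pi.single_eq_same]
      · intro k _ hk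
        by_cases h : j < k
        · rw [dif_pos h, Pi.single_eq_of_ne]
          intro hc
          exact hk (congrArg Subtype.val hc).symm
        · rw [dif_neg h]
          rfl
    · intro hc
      exact absurd (congrArg Subtype.val hc) (by simpa using (Fin.ne_of_lt hl).symm)

lemma mulRight_map {j i' i : Fin (r + 1)}
    (cA : ∀ k j i : Fin (r + 1), A k j →ₗ[ℂ] A j i →ₗ[ℂ] A k i) (g : M j →ₗ[ℂ] M j)
    (y : M j ⊗[ℂ] A j i') (b : A i' i) :
    mulRight (cA j i' i) (TensorProduct.map g LinearMap.id y) b =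
      TensorProduct.map g LinearMap.id (mulRight (cA j i' i) y b) := by
  induction y using TensorProduct.induction_on with
  | zero => simp
  | tmul m a => simp [mulRight_tmul]
  | add x y hx hy => simp only [map_add, LinearMap.map_add₂, hx, hy, LinearMap.add_apply]

lemma lower_mulRight
    (hassoc : ∀ l k j i : Fin (r + 1), ∀ (a : A l k) (b : A k j) (c : A j i),
      cA l j i (cA l k j a b) c = cA l k i a (cA k j i b c))
    {k j i' i : Fin (r + 1)} (v : M j →ₗ[ℂ] M k ⊗[ℂ] A k j)
    (y : M j ⊗[ℂ] A j i') (b : A i' i) :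
    lower r M A cA i v (mulRight (cA j i' i) y b) =
      mulRight (cA k i' i) (lower r M A cA i' v y) b := by
  induction y using TensorProduct.induction_on with
  | zero => simp
  | tmul m a =>
    rw [mulRight_tmul]
    have key : ∀ w : M k ⊗[ℂ] A k j,
        (TensorProduct.map LinearMap.id (TensorProduct.lift (cA k j i)))
          ((TensorProduct.assoc ℂ (M k) (A k j) (A j i)) (w ⊗ₜ[ℂ] (cA j i' i a b))) =
        mulRight (cA k i' i)
          ((TensorProduct.map LinearMap.id (TensorProduct.lift (cA k j i')))
            ((TensorProduct.assoc ℂ (M k) (A k j) (A j i')) (w ⊗ₜ[ℂ] a))) b := by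
      intro w
      induction w using TensorProduct.induction_on with
      | zero => simp
      | tmul n α => simp [mulRight_tmul, hassoc k j i' i α a b]
      | add x y hx hy =>
        simp only [TensorProduct.add_tmul, map_add, hx, hy, LinearMap.map_add₂,
          LinearMap.add_apply]
    simpa [lower] using key (v m)
  | add x y hx hy => simp only [map_add, LinearMap.map_add₂, hx, hy, LinearMap.add_apply]

lemma theta_xi_comm
    (hassoc : ∀ l k j i : Fin (r + 1), ∀ (a : A l k) (b : A k j) (c : A j i),
      cA l j i (cA l k j a b) c = cA l k i a (cA k j i b c))
    (g : ∀ i, M i →ₗ[ℂ] M i)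
    (u : ∀ j i : Fin (r + 1), i < j → (M i →ₗ[ℂ] M j ⊗[ℂ] A j i))
    (i : Fin r) (a : A i.succ i.castSucc) (j : Fin (r + 1)) (h : i.succ ≤ j)
    (y : M j ⊗[ℂ] A j i.succ) :
    theta r M A cA g u i.castSucc
        (xi r M A cA i (Pi.single (⟨j, h⟩ : {j' // i.succ ≤ j'}) y) a) =
      xi r M A cA i (theta r M A cA g u i.succ
        (Pi.single (⟨j, h⟩ : {j' // i.succ ≤ j'}) y)) a := by
  rw [xi_single, theta_single, theta_single]
  rw [map_add, LinearMap.add_apply, map_sum, LinearMap.sum_apply, xi_single]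
  congr 1
  · rw [mulRight_map]
  · refine Finset.sum_congr rfl fun k _ => ?_
    by_cases hk : j < k
    · rw [dif_pos hk, dif_pos hk, xi_single, lower_mulRight r M A cA hassoc]
    · rw [dif_neg hk, dif_neg hk, map_zero, LinearMap.zero_apply]


lemma tensor_eq_zero' {N B : Type} [AddCommGroup N] [Module ℂ N] [AddCommGroup B]
    [Module ℂ B] (hB : ∀ b : B, b = 0) (x : N ⊗[ℂ] B) : x = 0 := by
  induction x using TensorProduct.induction_on with
  | zero => rfl
  | tmul n b => rw [hB b, TensorProduct.tmul_zero]
  | add x y hx hy => rw [hx, hy, add_zero]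

lemma lower_unit {j k : Fin (r + 1)} (e : A j j)
    (he : ∀ α : A k j, cA k j j α e = α)
    (v : M j →ₗ[ℂ] M k ⊗[ℂ] A k j) (m : M j) :
    lower r M A cA j v (m ⊗ₜ[ℂ] e) = v m := by
  have key : ∀ w : M k ⊗[ℂ] A k j,
      (TensorProduct.map LinearMap.id (TensorProduct.lift (cA k j j)))
        ((TensorProduct.assoc ℂ (M k) (A k j) (A j j)) (w ⊗ₜ[ℂ] e)) = w := by
    intro w
    induction w using TensorProduct.induction_on with
    | zero => simp
    | tmul n α => simp [he α]
    | add x y hx hy => simp only [TensorProduct.add_tmul, map_add, hx, hy]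
  simpa [lower] using key (v m)

lemma theta_proj_diag (g : ∀ i, M i →ₗ[ℂ] M i)
    (u : ∀ j i : Fin (r + 1), i < j → (M i →ₗ[ℂ] M j ⊗[ℂ] A j i))
    (j : Fin (r + 1)) (x : P r M A j) :
    theta r M A cA g u j x ⟨j, le_refl j⟩ =
      TensorProduct.map (g j) LinearMap.id (x ⟨j, le_refl j⟩) := by
  have hmaps : (LinearMap.proj (⟨j, le_refl j⟩ : {k // j ≤ k})).comp
        (theta r M A cA g u j) =
      (TensorProduct.map (g j) LinearMap.id).comp
        (LinearMap.proj (⟨j, le_refl j⟩ : {k // j ≤ k})) := by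
    refine LinearMap.pi_ext fun j' y => ?_
    obtain ⟨j'', hj''⟩ := j'
    rw [LinearMap.comp_apply, LinearMap.comp_apply, LinearMap.proj_apply,
      LinearMap.proj_apply, theta_single]
    rcases eq_or_lt_of_le hj'' with he | hl
    · subst he
      rw [Pi.add_apply, Pi.single_eq_same, Finset.sum_apply, Finset.sum_eq_zero, add_zero,
        Pi.single_eq_same]
      intro k _
      by_cases h : j < k
      · rw [dif_pos h, Pi.single_eq_of_ne]
        intro hc
        exact absurd (congrArg Subtype.val hc) (by simpa using Fin.ne_of_lt h)
      · rw [dif_neg h]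
        rfl
    · have hne : (⟨j, le_refl j⟩ : {k // j ≤ k}) ≠ ⟨j'', hj''⟩ := by
        intro hc
        exact absurd (congrArg Subtype.val hc) (by simpa using Fin.ne_of_lt hl)
      rw [Pi.add_apply, Pi.single_eq_of_ne hne, Finset.sum_apply, Finset.sum_eq_zero,
        add_zero, Pi.single_eq_of_ne hne, map_zero]
      intro k _
      by_cases h : j'' < k
      · rw [dif_pos h, Pi.single_eq_of_ne]
        intro hc
        exact absurd (congrArg Subtype.val hc)
          (by simpa using Fin.ne_of_lt (lt_trans hl h))
      · rw [dif_neg h]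
        rfl
  exact LinearMap.congr_fun hmaps x

lemma theta_congr (g g' : ∀ i, M i →ₗ[ℂ] M i)
    (u : ∀ j i : Fin (r + 1), i < j → (M i →ₗ[ℂ] M j ⊗[ℂ] A j i))
    (i : Fin (r + 1))
    (hg : ∀ j : Fin (r + 1), i ≤ j →
      TensorProduct.map (g j) (LinearMap.id : A j i →ₗ[ℂ] A j i) =
        TensorProduct.map (g' j) LinearMap.id) :
    theta r M A cA g u i = theta r M A cA g' u i := by
  rw [theta, theta]
  refine Finset.sum_congr rfl fun j' _ => ?_
  rw [hg j'.1 j'.2]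

/-- The stabilizer in `𝐆_L = ∏ GL(P_i)` of the tuple `(ξ₂,…,ξ_r)` of canonical
composition maps is exactly the image of `G_L` under `θ_L`:  a tuple
`(γ₁,…,γ_r) ∈ ∏ GL(P_i)` satisfies `γ_{i−1} ∘ ξ_i = ξ_i ∘ (γ_i ⊗ id)` for all `i` if and
only if it equals `θ_L(g)` for some `g ∈ G_L` (i.e. some invertible diagonal entries
`g_i ∈ GL(M_i)` and arbitrary lower entries `u_{ji}`).

Hypotheses: `A i i` is one-dimensional, spanned by a unit `eA i` for the associative
compositions `cA`, which are surjective for `i ≤ j ≤ k`. -/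
theorem stmt1
    (eA : ∀ i, A i i)
    (hspan : ∀ i (x : A i i), ∃ c : ℂ, x = c • eA i)
    (hunitl : ∀ j i : Fin (r + 1), i ≤ j → ∀ a : A j i, cA j j i (eA j) a = a)
    (hunitr : ∀ j i : Fin (r + 1), i ≤ j → ∀ a : A j i, cA j i i a (eA i) = a)
    (hassoc : ∀ l k j i : Fin (r + 1), ∀ (a : A l k) (b : A k j) (c : A j i),
      cA l j i (cA l k j a b) c = cA l k i a (cA k j i b c))
    (hsurj : ∀ k j i : Fin (r + 1), i ≤ j → j ≤ k →
      Function.Surjective ⇑(TensorProduct.lift (cA k j i)))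
    (γ : ∀ i : Fin (r + 1), P r M A i ≃ₗ[ℂ] P r M A i) :
    (∀ (i : Fin r) (a : A i.succ i.castSucc),
        (γ i.castSucc).toLinearMap.comp ((xi r M A cA i).flip a) =
          ((xi r M A cA i).flip a).comp (γ i.succ).toLinearMap) ↔
      ∃ (g : ∀ i, M i ≃ₗ[ℂ] M i)
        (u : ∀ j i : Fin (r + 1), i < j → (M i →ₗ[ℂ] M j ⊗[ℂ] A j i)),
        ∀ i, (γ i).toLinearMap =
          theta r M A cA (fun i => (g i).toLinearMap) u i := by
  classical
  constructor
  · intro hcomm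
    have hAzero : ∀ j : Fin (r + 1), eA j = 0 → ∀ i : Fin (r + 1), i ≤ j →
        ∀ a : A j i, a = 0 := by
      intro j h0 i hij a
      rw [← hunitl j i hij a, h0, map_zero, LinearMap.zero_apply]
    have hphi : ∀ j, ∃ φ : A j j →ₗ[ℂ] ℂ,
        (∀ x, φ x • eA j = x) ∧ (eA j ≠ 0 → φ (eA j) = 1) := by
      intro j
      by_cases h0 : eA j = 0
      · refine ⟨0, fun x => ?_, fun h => absurd h0 h⟩
        obtain ⟨c, hc⟩ := hspan j x
        simp [hc, h0]
      · have hinj : Function.Injective (LinearMap.toSpanSingleton ℂ (A j j) (eA j)) := by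
          intro c c' hcc
          apply smul_left_injective ℂ h0
          simpa [LinearMap.toSpanSingleton_apply] using hcc
        have hsur : Function.Surjective (LinearMap.toSpanSingleton ℂ (A j j) (eA j)) := by
          intro x
          obtain ⟨c, hc⟩ := hspan j x
          exact ⟨c, by simp [LinearMap.toSpanSingleton_apply, hc]⟩
        let e := LinearEquiv.ofBijective _ ⟨hinj, hsur⟩
        have he : ∀ c : ℂ, e c = c • eA j := fun c => rfl
        refine ⟨e.symm.toLinearMap, fun x => ?_, fun _ => ?_⟩
        · show e.symm x • eA j = x
          rw [← he, e.apply_symm_apply]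
        · show e.symm (eA j) = 1
          have h1 : e 1 = eA j := by rw [he, one_smul]
          rw [← h1, e.symm_apply_apply]
    choose φ hφ1 hφ2 using hphi
    let ctr : ∀ j, (M j ⊗[ℂ] A j j) →ₗ[ℂ] M j := fun j =>
      (TensorProduct.rid ℂ (M j)).toLinearMap.comp (LinearMap.lTensor (M j) (φ j))
    have ctr_tmul : ∀ j (m : M j) (a : A j j), ctr j (m ⊗ₜ[ℂ] a) = φ j a • m := by
      intro j m a
      simp [ctr]
    have ctr_sec : ∀ j (w : M j ⊗[ℂ] A j j), (ctr j w) ⊗ₜ[ℂ] eA j = w := by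
      intro j w
      induction w using TensorProduct.induction_on with
      | zero => rw [map_zero, TensorProduct.zero_tmul]
      | tmul m a => rw [ctr_tmul, TensorProduct.smul_tmul, hφ1 j a]
      | add x y hx hy => rw [map_add, TensorProduct.add_tmul, hx, hy]
    let emb : ∀ j, M j →ₗ[ℂ] P r M A j := fun j =>
      (LinearMap.single ℂ (fun j' : {j' : Fin (r + 1) // j ≤ j'} => M j'.1 ⊗[ℂ] A j'.1 j)
        ⟨j, le_refl j⟩).comp ((TensorProduct.mk ℂ (M j) (A j j)).flip (eA j))
    let G : ∀ j, M j →ₗ[ℂ] M j := fun j =>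
      (ctr j).comp ((LinearMap.proj (⟨j, le_refl j⟩ : {j' // j ≤ j'})).comp
        ((γ j).toLinearMap.comp (emb j)))
    let U : ∀ k j : Fin (r + 1), j < k → (M j →ₗ[ℂ] M k ⊗[ℂ] A k j) := fun k j h =>
      (LinearMap.proj (⟨k, le_of_lt h⟩ : {j' // j ≤ j'})).comp
        ((γ j).toLinearMap.comp (emb j))
    have hbase : ∀ (j : Fin (r + 1)) (y : M j ⊗[ℂ] A j j),
        (γ j) (Pi.single (⟨j, le_refl j⟩ : {j' // j ≤ j'}) y) =
          theta r M A cA G U j (Pi.single (⟨j, le_refl j⟩ : {j' // j ≤ j'}) y) := by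
      intro j y
      induction y using TensorProduct.induction_on with
      | zero => rw [Pi.single_zero, map_zero, map_zero]
      | tmul m a =>
        have key : (γ j) (Pi.single (⟨j, le_refl j⟩ : {j' // j ≤ j'}) (m ⊗ₜ[ℂ] eA j)) =
            theta r M A cA G U j
              (Pi.single (⟨j, le_refl j⟩ : {j' // j ≤ j'}) (m ⊗ₜ[ℂ] eA j)) := by
          rw [theta_single]
          have h1 : TensorProduct.map (G j) LinearMap.id (m ⊗ₜ[ℂ] eA j) =
              (γ j) (Pi.single (⟨j, le_refl j⟩ : {j' // j ≤ j'}) (m ⊗ₜ[ℂ] eA j))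
                ⟨j, le_refl j⟩ := by
            rw [TensorProduct.map_tmul, LinearMap.id_apply]
            exact ctr_sec j _
          have h2 : ∀ (k : Fin (r + 1)) (h : j < k),
              lower r M A cA j (U k j h) (m ⊗ₜ[ℂ] eA j) =
                (γ j) (Pi.single (⟨j, le_refl j⟩ : {j' // j ≤ j'}) (m ⊗ₜ[ℂ] eA j))
                  ⟨k, le_of_lt h⟩ := by
            intro k h
            rw [lower_unit r M A cA (eA j) (fun α => hunitr k j (le_of_lt h) α)]
            rfl
          rw [h1]
          have hsum : (∑ k : Fin (r + 1), if h : j < k then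
                Pi.single (⟨k, le_trans (le_refl j) (le_of_lt h)⟩ : {j' // j ≤ j'})
                  (lower r M A cA j (U k j h) (m ⊗ₜ[ℂ] eA j)) else 0 : P r M A j) =
              ∑ k : Fin (r + 1), if h : j < k then
                Pi.single (⟨k, le_of_lt h⟩ : {j' // j ≤ j'})
                  ((γ j) (Pi.single (⟨j, le_refl j⟩ : {j' // j ≤ j'}) (m ⊗ₜ[ℂ] eA j))
                    ⟨k, le_of_lt h⟩) else 0 := by
            refine Finset.sum_congr rfl fun k _ => ?_
            by_cases h : j < k
            · rw [dif_pos h, dif_pos h, h2 k h]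
            · rw [dif_neg h, dif_neg h]
          rw [hsum]
          exact (recon r M A j
            ((γ j) (Pi.single (⟨j, le_refl j⟩ : {j' // j ≤ j'}) (m ⊗ₜ[ℂ] eA j)))).symm
        obtain ⟨c, hc⟩ := hspan j a
        have hps : (Pi.single (⟨j, le_refl j⟩ : {j' // j ≤ j'}) (c • (m ⊗ₜ[ℂ] eA j)) :
            P r M A j) = c • (Pi.single (⟨j, le_refl j⟩ : {j' // j ≤ j'}) (m ⊗ₜ[ℂ] eA j) :
              P r M A j) :=
          map_smul (LinearMap.single ℂ
            (fun j' : {j' : Fin (r + 1) // j ≤ j'} => M j'.1 ⊗[ℂ] A j'.1 j)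
            ⟨j, le_refl j⟩) c (m ⊗ₜ[ℂ] eA j)
        rw [hc, TensorProduct.tmul_smul, hps, map_smul, map_smul, key]
      | add x y hx hy => rw [Pi.single_add, map_add, map_add, hx, hy]
    have main : ∀ (n : ℕ) (i j : Fin (r + 1)) (hij : i ≤ j), j.1 - i.1 ≤ n →
        ∀ y : M j ⊗[ℂ] A j i,
          (γ i) (Pi.single (⟨j, hij⟩ : {j' // i ≤ j'}) y) =
            theta r M A cA G U i (Pi.single (⟨j, hij⟩ : {j' // i ≤ j'}) y) := by
      intro n
      induction n with
      | zero =>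
        intro i j hij hd y
        have hije : i = j := by
          apply le_antisymm hij
          rw [Fin.le_def]
          omega
        subst hije
        exact hbase i y
      | succ n ih =>
        intro i j hij hd y
        rcases eq_or_lt_of_le hij with he | hlt
        · subst he
          exact hbase i y
        · have hltv : i.1 < j.1 := hlt
          have hi' : i.1 < r := by
            have := j.isLt
            omega
          set i' : Fin r := ⟨i.1, hi'⟩ with hi'def
          have hsucc : i'.succ ≤ j := by
            rw [Fin.le_def]
            show i.1 + 1 ≤ j.1
            omega
          induction y using TensorProduct.induction_on with
          | zero => rw [Pi.single_zero, map_zero, map_zero]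
          | tmul m a =>
            obtain ⟨z, hz⟩ := hsurj j i'.succ i
              (by rw [Fin.le_def]; show i.1 ≤ i.1 + 1; omega) hsucc a
            rw [← hz]
            clear hz
            induction z using TensorProduct.induction_on with
            | zero => rw [map_zero, TensorProduct.tmul_zero, Pi.single_zero, map_zero,
                map_zero]
            | tmul b c =>
              have e1 : (Pi.single (⟨j, hij⟩ : {j' // i ≤ j'})
                  (m ⊗ₜ[ℂ] (TensorProduct.lift (cA j i'.succ i) (b ⊗ₜ[ℂ] c))) : P r M A i) =
                  xi r M A cA i'
                    (Pi.single (⟨j, hsucc⟩ : {j' // i'.succ ≤ j'}) (m ⊗ₜ[ℂ] b)) c := by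
                rw [xi_single r M A cA i' j hsucc (m ⊗ₜ[ℂ] b) c, mulRight_tmul,
                  TensorProduct.lift.tmul]
                rfl
              have e2 : (γ i) (xi r M A cA i'
                    (Pi.single (⟨j, hsucc⟩ : {j' // i'.succ ≤ j'}) (m ⊗ₜ[ℂ] b)) c) =
                  xi r M A cA i' ((γ i'.succ)
                    (Pi.single (⟨j, hsucc⟩ : {j' // i'.succ ≤ j'}) (m ⊗ₜ[ℂ] b))) c :=
                LinearMap.congr_fun (hcomm i' c) _
              have e3 : xi r M A cA i' (theta r M A cA G U i'.succ
                    (Pi.single (⟨j, hsucc⟩ : {j' // i'.succ ≤ j'}) (m ⊗ₜ[ℂ] b))) c =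
                  theta r M A cA G U i (xi r M A cA i'
                    (Pi.single (⟨j, hsucc⟩ : {j' // i'.succ ≤ j'}) (m ⊗ₜ[ℂ] b)) c) :=
                (theta_xi_comm r M A cA hassoc G U i' c j hsucc (m ⊗ₜ[ℂ] b)).symm
              rw [e1, e2, ih i'.succ j hsucc
                (by have hval : (i'.succ).1 = i.1 + 1 := rfl
                    omega) (m ⊗ₜ[ℂ] b), e3]
            | add z₁ z₂ h₁ h₂ =>
              rw [map_add, TensorProduct.tmul_add, Pi.single_add, map_add, map_add, h₁, h₂]
          | add y₁ y₂ hy₁ hy₂ => rw [Pi.single_add, map_add, map_add, hy₁, hy₂]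
    have hγθ : ∀ i, (γ i).toLinearMap = theta r M A cA G U i := by
      intro i
      refine LinearMap.pi_ext fun j' y => ?_
      obtain ⟨j, hj⟩ := j'
      exact main (j.1 - i.1) i j hj le_rfl y
    have ctr_map : ∀ j (w : M j ⊗[ℂ] A j j),
        ctr j (TensorProduct.map (G j) LinearMap.id w) = G j (ctr j w) := by
      intro j w
      induction w using TensorProduct.induction_on with
      | zero => rw [map_zero, map_zero, map_zero]
      | tmul m a =>
        rw [TensorProduct.map_tmul, LinearMap.id_apply, ctr_tmul, ctr_tmul, map_smul]
      | add x y hx hy => simp only [map_add, hx, hy]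
    have hGbij : ∀ j, eA j ≠ 0 → Function.Bijective (G j) := by
      intro j h0
      have hGsurj : Function.Surjective (G j) := by
        intro m'
        obtain ⟨x, hx⟩ := (γ j).surjective
          (Pi.single (⟨j, le_refl j⟩ : {j' // j ≤ j'}) (m' ⊗ₜ[ℂ] eA j))
        have hdiag := theta_proj_diag r M A cA G U j x
        rw [← hγθ j] at hdiag
        simp only [LinearEquiv.coe_coe] at hdiag
        rw [hx, Pi.single_eq_same] at hdiag
        refine ⟨ctr j (x ⟨j, le_refl j⟩), ?_⟩
        rw [← ctr_map, ← hdiag, ctr_tmul, hφ2 j h0, one_smul]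
      exact ⟨LinearMap.injective_iff_surjective.mpr hGsurj, hGsurj⟩
    let gE : ∀ j, M j ≃ₗ[ℂ] M j := fun j =>
      if h0 : eA j = 0 then LinearEquiv.refl ℂ (M j)
      else LinearEquiv.ofBijective (G j) (hGbij j h0)
    refine ⟨gE, U, fun i => ?_⟩
    rw [hγθ i]
    refine theta_congr r M A cA G (fun j => (gE j).toLinearMap) U i fun j hij => ?_
    by_cases h0 : eA j = 0
    · have hz : ∀ a : A j i, a = 0 := hAzero j h0 i hij
      apply LinearMap.ext
      intro x
      rw [tensor_eq_zero' hz x, map_zero, map_zero]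
    · have hgE : ((gE j : M j ≃ₗ[ℂ] M j) : M j →ₗ[ℂ] M j) = G j := by
        show (((if h0 : eA j = 0 then LinearEquiv.refl ℂ (M j)
            else LinearEquiv.ofBijective (G j) (hGbij j h0)) : M j ≃ₗ[ℂ] M j) :
              M j →ₗ[ℂ] M j) = G j
        rw [dif_neg h0]
        rfl
      exact congrArg (fun f => TensorProduct.map f (LinearMap.id : A j i →ₗ[ℂ] A j i))
        hgE.symm
  · rintro ⟨g, u, hgu⟩ i a
    refine LinearMap.pi_ext fun j' y => ?_
    obtain ⟨j, hj⟩ := j'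
    rw [LinearMap.comp_apply, LinearMap.comp_apply, LinearMap.flip_apply,
      LinearMap.flip_apply, hgu i.castSucc, hgu i.succ]
    exact theta_xi_comm r M A cA hassoc (fun i => (g i).toLinearMap) u i a j hj y


end Stab

end
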